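/- The forward dynamic program DPLS is correct: f(t, i) as defined by the recurrence equals the minimum cost of a partial production plan over periods 1..t satisfying all demands d_1..d_t, all production capacities 0 ≤ X_r ≤ α̅_r, all inventory capacities 0 ≤ I_r ≤ β̅_r for r ≤ t, and ending with inventory I_t = i. In particular f(T, 0) equals the optimal cost of (L). -/

import Mathlib

/-- Feasibility for `(L)` (no lower bounds): `I 0 = I T = 0`, flow conservation,
production capacities `α̅` and inventory capacities `β̅`. -/
def Feasible (T : ℕ) (d ahi bhi : ℕ → ℕ) (X I : ℕ → ℕ) : Prop :=
  I 0 = 0 ∧ I T = 0 ∧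
  ∀ t ∈ Finset.Icc 1 T, I (t - 1) + X t = d t + I t ∧ X t ≤ ahi t ∧ I t ≤ bhi t

/-- Total cost `Σ (p_t X_t + h_t I_t + s_t·[X_t > 0])` over periods `1..T`. -/
def planCost (T : ℕ) (p h s : ℕ → ℕ) (X I : ℕ → ℕ) : ℕ :=
  ∑ t ∈ Finset.Icc 1 T, (p t * X t + h t * I t + if 0 < X t then s t else 0)

/-- The forward dynamic program DPLS: `dpls t i` is `f(t, i)`.
`f(0,0) = 0`, `f(0,i) = ⊤` for `i ≥ 1`, and
`f(t,i) = min_{j ∈ [max(0, d_t+i-α̅_t), min(β̅_{t-1}, d_t+i)]}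
  f(t-1,j) + s_t·[x>0] + p_t x + h_t i` with `x = i + d_t - j`
(truncated ℕ-subtraction realizes the `max(0, ·)`), and `f(t,i) = ⊤` for
`i > β̅_t`. -/
noncomputable def dpls (d p h s ahi bhi : ℕ → ℕ) : ℕ → ℕ → ℕ∞
  | 0, i => if i = 0 then 0 else ⊤
  | t + 1, i =>
    if i ≤ bhi (t + 1) then
      ⨅ j ∈ Finset.Icc (d (t + 1) + i - ahi (t + 1)) (min (bhi t) (d (t + 1) + i)),
        dpls d p h s ahi bhi t j +
          (((if 0 < i + d (t + 1) - j then s (t + 1) else 0) +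
              p (t + 1) * (i + d (t + 1) - j) + h (t + 1) * i : ℕ) : ℕ∞)
    else ⊤

/-- Correctness of DPLS: `f(t, i)` equals the minimum cost of a partial plan
over periods `1..t` satisfying demands `d_1..d_t` and all capacities, ending
with inventory `I t = i`; in particular `f(T, 0)` is the optimal cost of `(L)`. -/
theorem dpls_correct (T : ℕ) (d p h s ahi bhi : ℕ → ℕ) :
    (∀ t i : ℕ,
      dpls d p h s ahi bhi t i =
        sInf {c : ℕ∞ | ∃ X I : ℕ → ℕ, I 0 = 0 ∧ I t = i ∧
          (∀ r ∈ Finset.Icc 1 t, I (r - 1) + X r = d r + I r ∧ X r ≤ ahi r ∧ I r ≤ bhi r) ∧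
          c = (planCost t p h s X I : ℕ∞)}) ∧
    dpls d p h s ahi bhi T 0 =
      sInf {c : ℕ∞ | ∃ X I : ℕ → ℕ, Feasible T d ahi bhi X I ∧
        c = (planCost T p h s X I : ℕ∞)} := by
  have key : ∀ t i : ℕ,
      dpls d p h s ahi bhi t i =
        sInf {c : ℕ∞ | ∃ X I : ℕ → ℕ, I 0 = 0 ∧ I t = i ∧
          (∀ r ∈ Finset.Icc 1 t, I (r - 1) + X r = d r + I r ∧ X r ≤ ahi r ∧ I r ≤ bhi r) ∧
          c = (planCost t p h s X I : ℕ∞)} := by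
    intro t
    induction t with
    | zero =>
      intro i
      by_cases hi : i = 0
      · subst hi
        simp only [dpls, if_pos rfl]
        symm
        apply le_antisymm _ zero_le
        apply sInf_le
        exact ⟨0, 0, rfl, rfl, by simp, by simp [planCost]⟩
      · simp only [dpls, if_neg hi]
        symm
        rw [sInf_eq_top]
        rintro c ⟨X, I, hI0, hIt, -, rfl⟩
        exact absurd (hI0.symm.trans hIt).symm hi
    | succ t ih =>
      intro i
      rw [dpls]
      by_cases hib : i ≤ bhi (t + 1)
      · rw [if_pos hib]
        apply le_antisymm
        · apply le_sInf
          rintro c ⟨X, I, hI0, hIt, hcon, rfl⟩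
          have hm : t + 1 ∈ Finset.Icc 1 (t + 1) := by simp
          obtain ⟨hflow, hX, hIb⟩ := hcon (t + 1) hm
          simp only [Nat.add_sub_cancel] at hflow
          rw [hIt] at hflow
          have hjb : I t ≤ bhi t := by
            rcases Nat.eq_zero_or_pos t with h0 | h0
            · rw [h0, hI0]; exact Nat.zero_le _
            · exact (hcon t (by simp only [Finset.mem_Icc]; omega)).2.2
          have hjmem : I t ∈ Finset.Icc (d (t+1) + i - ahi (t+1))
              (min (bhi t) (d (t+1) + i)) := by
            simp only [Finset.mem_Icc, le_min_iff]
            omega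
          refine le_trans (iInf₂_le (I t) hjmem) ?_
          have hx : i + d (t+1) - I t = X (t+1) := by omega
          rw [hx]
          have hsplit : planCost (t+1) p h s X I =
              planCost t p h s X I +
                ((if 0 < X (t+1) then s (t+1) else 0) + p (t+1) * X (t+1) + h (t+1) * i) := by
            unfold planCost
            rw [Finset.sum_Icc_succ_top (by omega : 1 ≤ t + 1), hIt]
            ring
          rw [hsplit]
          push_cast
          refine add_le_add_left ?_ _
          rw [ih]
          exact sInf_le ⟨X, I, hI0, rfl,
            fun r hr => hcon r (by simp only [Finset.mem_Icc] at hr ⊢; omega), by ring_nf⟩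
        · apply le_iInf₂
          intro j hj
          rcases eq_top_or_lt_top (dpls d p h s ahi bhi t j) with htop | hlt
          · simp [htop]
          simp only [Finset.mem_Icc, le_min_iff] at hj
          have hne : ({c : ℕ∞ | ∃ X I : ℕ → ℕ, I 0 = 0 ∧ I t = j ∧
              (∀ r ∈ Finset.Icc 1 t, I (r - 1) + X r = d r + I r ∧ X r ≤ ahi r ∧ I r ≤ bhi r) ∧
              c = (planCost t p h s X I : ℕ∞)}).Nonempty := by
            by_contra hemp
            rw [Set.not_nonempty_iff_eq_empty] at hemp
            rw [ih, hemp, sInf_empty] at hlt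
            exact absurd rfl hlt.ne
          obtain ⟨X, I, hI0, hIt, hcon, hc⟩ := csInf_mem hne
          rw [← ih] at hc
          set x := i + d (t+1) - j with hxdef
          set X' : ℕ → ℕ := fun r => if r = t+1 then x else X r with hX'
          set I' : ℕ → ℕ := fun r => if r = t+1 then i else I r with hI'
          have hXr : ∀ r, r ≠ t + 1 → X' r = X r := by intro r hr; simp [hX', hr]
          have hIr : ∀ r, r ≠ t + 1 → I' r = I r := by intro r hr; simp [hI', hr]
          have hcost : (planCost (t+1) p h s X' I' : ℕ∞) =
              dpls d p h s ahi bhi t j +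
                (((if 0 < x then s (t + 1) else 0) + p (t + 1) * x + h (t + 1) * i : ℕ) : ℕ∞) := by
            have h1 : planCost (t+1) p h s X' I' =
                planCost t p h s X I +
                  ((if 0 < x then s (t + 1) else 0) + p (t + 1) * x + h (t + 1) * i) := by
              unfold planCost
              rw [Finset.sum_Icc_succ_top (by omega : 1 ≤ t + 1)]
              have hcg : ∀ r ∈ Finset.Icc 1 t,
                  (p r * X' r + h r * I' r + if 0 < X' r then s r else 0) =
                  (p r * X r + h r * I r + if 0 < X r then s r else 0) := by
                intro r hr
                simp only [Finset.mem_Icc] at hr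
                rw [hXr r (by omega), hIr r (by omega)]
              rw [Finset.sum_congr rfl hcg]
              simp only [hX', hI', if_pos rfl]
              ring
            rw [h1, hc]
            push_cast
            ring
          refine le_trans (sInf_le ?_) hcost.le
          refine ⟨X', I', ?_, ?_, ?_, rfl⟩
          · rw [hIr 0 (by omega)]; exact hI0
          · simp [hI']
          · intro r hr
            simp only [Finset.mem_Icc] at hr
            by_cases hr1 : r = t + 1
            · subst hr1
              simp only [Nat.add_sub_cancel]
              rw [hIr t (by omega), hIt]
              simp only [Nat.add_sub_cancel, hX', hI', if_pos rfl]
              refine ⟨by omega, by omega, hib⟩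
            · rw [hXr r hr1, hIr r hr1, hIr (r-1) (by omega)]
              exact hcon r (by simp only [Finset.mem_Icc]; omega)
      · rw [if_neg hib]
        symm
        rw [sInf_eq_top]
        rintro c ⟨X, I, -, hIt, hcon, rfl⟩
        have := (hcon (t+1) (by simp)).2.2
        rw [hIt] at this
        exact absurd this hib
  refine ⟨key, ?_⟩
  rw [key T 0]
  congr 1
  ext c
  simp only [Set.mem_setOf_eq, Feasible]
  constructor
  · rintro ⟨X, I, h1, h2, h3, h4⟩; exact ⟨X, I, ⟨h1, h2, h3⟩, h4⟩
  · rintro ⟨X, I, ⟨h1, h2, h3⟩, h4⟩; exact ⟨X, I, h1, h2, h3, h4⟩
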